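/- Let B be an integral domain, R ⊆ B a subring, f ∈ R a nonzero element, and suppose δ is a locally nilpotent derivation on B restricting to R with δ(f) = 0. If I is a δ-stable ideal of R containing f, then δ extends uniquely to a derivation of the affine modification R[f⁻¹I] ⊆ Frac(R), and this extension is locally nilpotent. -/

import Mathlib

/-! ### Generic helpers -/

section Core

/-- Build a `ℤ`-derivation of a commutative ring from a plain function. -/
noncomputable def derivationOfCore {A : Type*} [CommRing A] (g : A → A)
    (hadd : ∀ a b, g (a + b) = g a + g b)
    (hleib : ∀ a b, g (a * b) = a * g b + b * g a) : Derivation ℤ A A := by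
  have h0 : g 0 = 0 := by
    have h := hadd 0 0
    rw [add_zero] at h
    have h2 : g 0 + 0 = g 0 + g 0 := by rw [add_zero]; exact h
    exact (add_left_cancel h2).symm
  refine Derivation.mk' ⟨⟨g, fun a b => hadd a b⟩, fun n x => ?_⟩ (fun a b => by
    show g (a * b) = a • g b + b • g a
    rw [hleib, smul_eq_mul, smul_eq_mul])
  show g (n • x) = n • g x
  induction n using Int.induction_on with
  | zero => simpa using h0
  | succ k ih => rw [add_smul, one_smul, hadd, ih, add_smul, one_smul]
  | pred k ih =>
      rw [sub_smul, one_smul, sub_smul, one_smul, ← ih]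
      have hs : ∀ a b : A, g (a - b) = g a - g b := by
        intro a b
        have hn : ∀ c : A, g (-c) = - g c := by
          intro c
          have h3 := hadd c (-c)
          rw [add_neg_cancel, h0] at h3
          exact (neg_eq_of_add_eq_zero_right h3.symm).symm
        rw [sub_eq_add_neg, hadd, hn, sub_eq_add_neg]
      rw [hs]

@[simp] lemma derivationOfCore_apply {A : Type*} [CommRing A] (g : A → A)
    (hadd : ∀ a b, g (a + b) = g a + g b)
    (hleib : ∀ a b, g (a * b) = a * g b + b * g a) (x : A) :
    derivationOfCore g hadd hleib x = g x := rfl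

variable {A : Type*} [CommRing A] (E : Derivation ℤ A A)

lemma derIter_zero (n : ℕ) : (⇑E)^[n] (0 : A) = 0 := by
  induction n with
  | zero => rfl
  | succ k ih => rw [Function.iterate_succ_apply, map_zero, ih]

lemma derIter_add (n : ℕ) (x y : A) :
    (⇑E)^[n] (x + y) = (⇑E)^[n] x + (⇑E)^[n] y := by
  induction n generalizing x y with
  | zero => rfl
  | succ k ih => rw [Function.iterate_succ_apply, map_add, ih,
      Function.iterate_succ_apply, Function.iterate_succ_apply]

lemma derIter_eventually {x : A} {m : ℕ} (h : (⇑E)^[m] x = 0) {n : ℕ} (hmn : m ≤ n) :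
    (⇑E)^[n] x = 0 := by
  rw [← Nat.sub_add_cancel hmn, Function.iterate_add_apply, h, derIter_zero]

lemma derIter_nilp_mul : ∀ (k m n : ℕ) (x y : A), m + n ≤ k →
    (⇑E)^[m] x = 0 → (⇑E)^[n] y = 0 → ∃ N, (⇑E)^[N] (x * y) = 0 := by
  intro k
  induction k with
  | zero =>
      intro m n x y hk hx hy
      have hm : m = 0 := by omega
      subst hm
      exact ⟨0, by rw [show x = 0 from hx, zero_mul]; rfl⟩
  | succ k ih =>
      intro m n x y hk hx hy
      match m, n with
      | 0, n => exact ⟨0, by rw [show x = 0 from hx, zero_mul]; rfl⟩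
      | m + 1, 0 => exact ⟨0, by rw [show y = 0 from hy, mul_zero]; rfl⟩
      | m + 1, n + 1 =>
          obtain ⟨N₁, h₁⟩ := ih (m + 1) n x (E y) (by omega) hx
            (by rw [← Function.iterate_succ_apply]; exact hy)
          obtain ⟨N₂, h₂⟩ := ih m (n + 1) (E x) y (by omega)
            (by rw [← Function.iterate_succ_apply]; exact hx) hy
          refine ⟨max N₁ N₂ + 1, ?_⟩
          rw [Function.iterate_succ_apply, Derivation.leibniz, smul_eq_mul, smul_eq_mul,
            derIter_add, derIter_eventually E h₁ (le_max_left _ _),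
            derIter_eventually E (by rw [mul_comm] at h₂; exact h₂) (le_max_right _ _), add_zero]

lemma der_add' (a b : A) : E (a + b) = E a + E b := map_add E a b

lemma der_leibniz' (a b : A) : E (a * b) = a * E b + b * E a := by
  rw [Derivation.leibniz, smul_eq_mul, smul_eq_mul]

/-- The subring of elements eventually killed by a derivation. -/
def nilpSubring : Subring A where
  carrier := {x : A | ∃ n, (⇑E)^[n] x = 0}
  zero_mem' := ⟨0, rfl⟩
  one_mem' := ⟨1, by rw [Function.iterate_one]; exact E.map_one_eq_zero⟩
  add_mem' := by
    rintro a b ⟨m, hm⟩ ⟨n, hn⟩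
    exact ⟨max m n, by rw [derIter_add, derIter_eventually E hm (le_max_left _ _),
      derIter_eventually E hn (le_max_right _ _), add_zero]⟩
  neg_mem' := by
    rintro a ⟨m, hm⟩
    refine ⟨m, ?_⟩
    have : ∀ k (x : A), (⇑E)^[k] (-x) = -(⇑E)^[k] x := by
      intro k
      induction k with
      | zero => intro x; rfl
      | succ j ihj => intro x; rw [Function.iterate_succ_apply, map_neg, ihj,
          Function.iterate_succ_apply]
    rw [this, hm, neg_zero]
  mul_mem' := by
    rintro a b ⟨m, hm⟩ ⟨n, hn⟩
    exact derIter_nilp_mul E (m + n) m n a b le_rfl hm hn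

/-- The subring of elements of `S` mapped into `S` by a derivation. -/
def derSubring (S : Subring A) : Subring A where
  carrier := {x : A | x ∈ S ∧ E x ∈ S}
  zero_mem' := ⟨S.zero_mem, by rw [map_zero]; exact S.zero_mem⟩
  one_mem' := ⟨S.one_mem, by rw [E.map_one_eq_zero]; exact S.zero_mem⟩
  add_mem' := by
    rintro a b ⟨ha, ha'⟩ ⟨hb, hb'⟩
    exact ⟨S.add_mem ha hb, by rw [map_add]; exact S.add_mem ha' hb'⟩
  neg_mem' := by
    rintro a ⟨ha, ha'⟩
    exact ⟨S.neg_mem ha, by rw [map_neg]; exact S.neg_mem ha'⟩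
  mul_mem' := by
    rintro a b ⟨ha, ha'⟩ ⟨hb, hb'⟩
    refine ⟨S.mul_mem ha hb, ?_⟩
    rw [Derivation.leibniz, smul_eq_mul, smul_eq_mul]
    exact S.add_mem (S.mul_mem ha hb') (S.mul_mem hb ha')

/-- The subring on which two derivations agree. -/
def eqSubring (E' : Derivation ℤ A A) : Subring A where
  carrier := {x : A | E x = E' x}
  zero_mem' := by simp only [Set.mem_setOf_eq, map_zero]
  one_mem' := by simp only [Set.mem_setOf_eq, E.map_one_eq_zero, E'.map_one_eq_zero]
  add_mem' := by
    intro a b ha hb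
    simp only [Set.mem_setOf_eq, map_add] at *
    rw [ha, hb]
  neg_mem' := by
    intro a ha
    simp only [Set.mem_setOf_eq, map_neg] at *
    rw [ha]
  mul_mem' := by
    intro a b ha hb
    simp only [Set.mem_setOf_eq, Derivation.leibniz] at *
    rw [ha, hb]

end Core

/-! ### Extending a derivation to the fraction field -/

section FracDer
variable {B : Type*} [CommRing B] [IsDomain B] (δ : Derivation ℤ B B)

local notation "K" => FractionRing B

/-- The ring hom `B → K ⊕ εK` given by `b ↦ b + ε δ b`. -/
noncomputable def tszeHom : B →+* TrivSqZeroExt (FractionRing B) (FractionRing B) where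
  toFun b := ⟨algebraMap B K b, algebraMap B K (δ b)⟩
  map_one' := by ext <;> simp
  map_mul' a b := by
    ext
    · simp [TrivSqZeroExt.fst_mul]; rfl
    · simp only [TrivSqZeroExt.snd_mul, Derivation.leibniz, map_add, map_mul,
        op_smul_eq_smul, smul_eq_mul, TrivSqZeroExt.snd_mk, TrivSqZeroExt.fst_mk]
      change _ = algebraMap B K a * algebraMap B K (δ b)
        + MulOpposite.op (algebraMap B K b) • algebraMap B K (δ a)
      rw [op_smul_eq_smul, smul_eq_mul, mul_comm (algebraMap B K b)]
  map_zero' := by ext <;> simp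
  map_add' a b := by ext <;> simp <;> rfl

lemma tszeHom_isUnit (y : nonZeroDivisors B) : IsUnit (tszeHom δ y) := by
  rw [TrivSqZeroExt.isUnit_iff_isUnit_fst]
  have h : (tszeHom δ y).fst = algebraMap B K y := rfl
  rw [h, isUnit_iff_ne_zero]
  have hi := IsFractionRing.injective B K
  intro h0
  exact nonZeroDivisors.coe_ne_zero y (hi (by rw [map_zero]; exact h0))

noncomputable def fracLift : FractionRing B →+* TrivSqZeroExt (FractionRing B) (FractionRing B) :=
  IsLocalization.lift (M := nonZeroDivisors B) (tszeHom_isUnit δ)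

lemma fracLift_algebraMap (b : B) : fracLift δ (algebraMap B K b) = tszeHom δ b :=
  IsLocalization.lift_eq _ b

lemma fracLift_fst (x : K) : (fracLift δ x).fst = x := by
  have h : ((TrivSqZeroExt.fstHom (FractionRing B) (FractionRing B)
      (FractionRing B)).toRingHom.comp (fracLift δ)) = RingHom.id K := by
    apply IsLocalization.ringHom_ext (nonZeroDivisors B)
    ext b
    simp only [RingHom.comp_apply, RingHom.id_apply]
    rw [fracLift_algebraMap]
    rfl
  exact congrFun (congrArg DFunLike.coe h) x

/-- The extension of `δ` to the fraction field. -/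
noncomputable def fracDer :=
  derivationOfCore (fun x => (fracLift δ x).snd)
    (fun a b => by
      show (fracLift δ (a + b)).snd = (fracLift δ a).snd + (fracLift δ b).snd
      rw [(fracLift δ).map_add a b, TrivSqZeroExt.snd_add])
    (fun a b => by
      show (fracLift δ (a * b)).snd = a * (fracLift δ b).snd + b * (fracLift δ a).snd
      have h := congrArg TrivSqZeroExt.snd (map_mul (fracLift δ) a b)
      rw [TrivSqZeroExt.snd_mul] at h
      rw [h, fracLift_fst, fracLift_fst, op_smul_eq_smul, smul_eq_mul, smul_eq_mul, mul_comm b])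

lemma fracDer_apply (x : K) : fracDer δ x = (fracLift δ x).snd := rfl

lemma fracDer_algebraMap (b : B) : fracDer δ (algebraMap B K b) = algebraMap B K (δ b) := by
  rw [fracDer_apply, fracLift_algebraMap]
  rfl

end FracDer



/-- The affine modification `R[f⁻¹I] ⊆ Frac B`, for a subring `R` of a domain `B`,
`0 ≠ f ∈ I ⊆ R`: the subring of the fraction field generated by `R` and the
fractions `a / f`, `a ∈ I`. -/
noncomputable def affMod {B : Type*} [CommRing B] [IsDomain B] (R : Subring B)
    (I : Ideal R) (f : B) : Subring (FractionRing B) :=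
  Subring.closure ((algebraMap B (FractionRing B)) '' R ∪
    {y : FractionRing B | ∃ x ∈ I, y =
      algebraMap B (FractionRing B) ((x : R) : B) / algebraMap B (FractionRing B) f})

lemma affMod_mem {B : Type*} [CommRing B] [IsDomain B] (R : Subring B)
    (I : Ideal R) (f : B) (r : B) (hr : r ∈ R) :
    algebraMap B (FractionRing B) r ∈ affMod R I f :=
  Subring.subset_closure (Or.inl ⟨r, hr, rfl⟩)

/-- If `δ` is a locally nilpotent derivation of a characteristic-zero domain `B`
restricting to a subring `R`, `δ f = 0`, and `I` is a `δ`-stable ideal of `R`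
containing `f`, then `δ` extends uniquely to a derivation of the affine
modification `R[f⁻¹I]`, and the extension is again locally nilpotent. -/
theorem stmt11 {B : Type*} [CommRing B] [IsDomain B] [CharZero B]
    (δ : Derivation ℤ B B) (hln : ∀ b : B, ∃ n : ℕ, (⇑δ)^[n] b = 0)
    (R : Subring B) (hR : ∀ r ∈ R, δ r ∈ R)
    (f : B) (hfR : f ∈ R) (hf0 : f ≠ 0) (hδf : δ f = 0)
    (I : Ideal R) (hfI : (⟨f, hfR⟩ : R) ∈ I)
    (hIstable : ∀ x : R, x ∈ I → ∃ y ∈ I, ((y : R) : B) = δ ((x : R) : B)) :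
    ∃ D : Derivation ℤ (affMod R I f) (affMod R I f),
      ((∀ (r : B) (hr : r ∈ R),
          (D ⟨algebraMap B (FractionRing B) r, affMod_mem R I f r hr⟩ : FractionRing B)
            = algebraMap B (FractionRing B) (δ r)) ∧
        (∀ x : affMod R I f, ∃ n : ℕ, (⇑D)^[n] x = 0)) ∧
      (∀ D' : Derivation ℤ (affMod R I f) (affMod R I f),
        (∀ (r : B) (hr : r ∈ R),
          (D' ⟨algebraMap B (FractionRing B) r, affMod_mem R I f r hr⟩ : FractionRing B)
            = algebraMap B (FractionRing B) (δ r)) → D' = D) := by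
  classical
  set T : Set (FractionRing B) := (algebraMap B (FractionRing B)) '' R ∪
    {y : FractionRing B | ∃ x ∈ I, y =
      algebraMap B (FractionRing B) ((x : R) : B) / algebraMap B (FractionRing B) f} with hTdef
  have hclos : affMod R I f = Subring.closure T := rfl
  have hfne : algebraMap B (FractionRing B) f ≠ 0 := fun h =>
    hf0 (IsFractionRing.injective B (FractionRing B) (by rw [map_zero]; exact h))
  -- quotient rule for `c / f`
  have hquot : ∀ c : B,
      fracDer δ (algebraMap B (FractionRing B) c / algebraMap B (FractionRing B) f)
      = algebraMap B (FractionRing B) (δ c) / algebraMap B (FractionRing B) f := by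
    intro c
    have e1 := congrArg (fracDer δ)
      (div_mul_cancel₀ (algebraMap B (FractionRing B) c) hfne)
    rw [der_leibniz', fracDer_algebraMap, fracDer_algebraMap, hδf, map_zero,
      mul_zero, zero_add] at e1
    rw [eq_div_iff hfne, mul_comm]
    exact e1
  -- stability of `affMod` under `fracDer δ`
  have hTsub : T ⊆ ↑(derSubring (fracDer δ) (affMod R I f)) := by
    rintro t (⟨r, hr, rfl⟩ | ⟨x, hxI, rfl⟩)
    · exact ⟨affMod_mem R I f r hr, by
        rw [fracDer_algebraMap]; exact affMod_mem R I f _ (hR r hr)⟩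
    · refine ⟨Subring.subset_closure (Or.inr ⟨x, hxI, rfl⟩), ?_⟩
      rw [hquot]
      obtain ⟨y, hyI, hy⟩ := hIstable x hxI
      rw [← hy]
      exact Subring.subset_closure (Or.inr ⟨y, hyI, rfl⟩)
  have hstab : ∀ x : affMod R I f, fracDer δ (x : FractionRing B) ∈ affMod R I f := by
    intro x
    have hx : (x : FractionRing B) ∈ Subring.closure T := x.2
    exact ((Subring.closure_le.mpr hTsub) hx).2
  -- the restricted derivation
  set g : affMod R I f → affMod R I f :=
    fun x => ⟨fracDer δ (x : FractionRing B), hstab x⟩ with hgdef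
  have hgadd : ∀ a b, g (a + b) = g a + g b := by
    intro a b
    apply Subtype.ext
    show fracDer δ ((a : FractionRing B) + b) = fracDer δ a + fracDer δ b
    exact der_add' (fracDer δ) _ _
  have hgleib : ∀ a b, g (a * b) = a * g b + b * g a := by
    intro a b
    apply Subtype.ext
    show fracDer δ ((a : FractionRing B) * b)
      = (a : FractionRing B) * fracDer δ b + (b : FractionRing B) * fracDer δ a
    exact der_leibniz' (fracDer δ) _ _
  refine ⟨derivationOfCore g hgadd hgleib, ⟨?_, ?_⟩, ?_⟩
  · -- extension property
    intro r hr
    show fracDer δ (algebraMap B (FractionRing B) r) = algebraMap B (FractionRing B) (δ r)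
    exact fracDer_algebraMap δ r
  · -- local nilpotency
    have hDit : ∀ (n : ℕ) (x : affMod R I f),
        (((⇑(derivationOfCore g hgadd hgleib))^[n] x : affMod R I f) : FractionRing B)
          = (⇑(fracDer δ))^[n] (x : FractionRing B) := by
      intro n
      induction n with
      | zero => intro x; rfl
      | succ k ih =>
          intro x
          rw [Function.iterate_succ_apply, Function.iterate_succ_apply, ih]
          rfl
    have halg : ∀ (n : ℕ) (c : B),
        (⇑(fracDer δ))^[n] (algebraMap B (FractionRing B) c)
          = algebraMap B (FractionRing B) ((⇑δ)^[n] c) := by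
      intro n
      induction n with
      | zero => intro c; rfl
      | succ k ih =>
          intro c
          rw [Function.iterate_succ_apply, Function.iterate_succ_apply,
            fracDer_algebraMap, ih]
    have hdiv : ∀ (n : ℕ) (c : B),
        (⇑(fracDer δ))^[n]
            (algebraMap B (FractionRing B) c / algebraMap B (FractionRing B) f)
          = algebraMap B (FractionRing B) ((⇑δ)^[n] c) / algebraMap B (FractionRing B) f := by
      intro n
      induction n with
      | zero => intro c; rfl
      | succ k ih =>
          intro c
          rw [Function.iterate_succ_apply, Function.iterate_succ_apply, hquot, ih]
    have hTnilp : T ⊆ ↑(nilpSubring (fracDer δ)) := by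
      rintro t (⟨r, hr, rfl⟩ | ⟨x, hxI, rfl⟩)
      · obtain ⟨n, hn⟩ := hln r
        exact ⟨n, by rw [halg, hn, map_zero]⟩
      · obtain ⟨n, hn⟩ := hln ((x : R) : B)
        exact ⟨n, by rw [hdiv, hn, map_zero, zero_div]⟩
    intro x
    have hx : (x : FractionRing B) ∈ Subring.closure T := x.2
    obtain ⟨n, hn⟩ := (Subring.closure_le.mpr hTnilp) hx
    refine ⟨n, ?_⟩
    apply Subtype.ext
    rw [hDit n x, hn]
    rfl
  · -- uniqueness
    intro D' hD'
    set D := derivationOfCore g hgadd hgleib with hDdef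
    have hext : ∀ (r : B) (hr : r ∈ R),
        (D ⟨algebraMap B (FractionRing B) r, affMod_mem R I f r hr⟩ : FractionRing B)
          = algebraMap B (FractionRing B) (δ r) := fun r hr => fracDer_algebraMap δ r
    have hU : Subring.closure T ≤ (eqSubring D' D).map (affMod R I f).subtype := by
      apply Subring.closure_le.mpr
      rintro t (⟨r, hr, rfl⟩ | ⟨x, hxI, rfl⟩)
      · refine ⟨⟨algebraMap B (FractionRing B) r, affMod_mem R I f r hr⟩, ?_, rfl⟩
        show D' _ = D _
        apply Subtype.ext
        rw [hD' r hr, hext r hr]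
      · -- the generator `x / f`
        set s : affMod R I f := ⟨algebraMap B (FractionRing B) ((x : R) : B) /
            algebraMap B (FractionRing B) f,
          Subring.subset_closure (Or.inr ⟨x, hxI, rfl⟩)⟩ with hsdef
        refine ⟨s, ?_, rfl⟩
        show D' s = D s
        set F : affMod R I f := ⟨algebraMap B (FractionRing B) f, affMod_mem R I f f hfR⟩
          with hFdef
        set a : affMod R I f := ⟨algebraMap B (FractionRing B) ((x : R) : B),
          affMod_mem R I f _ (x : R).2⟩ with hadef
        have hFs : F * s = a := by
          apply Subtype.ext
          show algebraMap B (FractionRing B) f *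
            (algebraMap B (FractionRing B) ((x : R) : B) / algebraMap B (FractionRing B) f) = _
          rw [mul_div_cancel₀ _ hfne]
        have hcomp : ∀ (E : Derivation ℤ (affMod R I f) (affMod R I f)),
            (∀ (r : B) (hr : r ∈ R),
              (E ⟨algebraMap B (FractionRing B) r, affMod_mem R I f r hr⟩ : FractionRing B)
                = algebraMap B (FractionRing B) (δ r)) →
            (E s : FractionRing B)
              = algebraMap B (FractionRing B) (δ ((x : R) : B))
                / algebraMap B (FractionRing B) f := by
          intro E hE
          have e1 := congrArg E hFs
          rw [Derivation.leibniz] at e1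
          have e2 := congrArg (fun z : affMod R I f => (z : FractionRing B)) e1
          try simp only at e2
          have hEF : (E F : FractionRing B) = 0 := by
            rw [hE f hfR, hδf, map_zero]
          have hEa : (E a : FractionRing B) = algebraMap B (FractionRing B) (δ ((x : R) : B)) :=
            hE _ (x : R).2
          rw [show ((F • E s + s • E F : affMod R I f) : FractionRing B)
              = (F : FractionRing B) * (E s : FractionRing B)
                + (s : FractionRing B) * (E F : FractionRing B) from rfl] at e2
          rw [hEF, mul_zero, add_zero, hEa] at e2
          rw [eq_div_iff hfne, mul_comm]
          exact e2
        apply Subtype.ext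
        rw [hcomp D' hD', hcomp D hext]
    ext x
    have hx : (x : FractionRing B) ∈ Subring.closure T := x.2
    obtain ⟨y, hy, hyx⟩ := hU hx
    have hyx' : y = x := Subtype.ext hyx
    rw [← hyx']
    exact congrArg (fun z : affMod R I f => (z : FractionRing B)) hy
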